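/- Let σ₁, σ₂ ∈ K∞ with σ₁(s) ≥ s for all s, and let λ be a class-K∞ function with σ₂(λ(s)) < (1/4)σ₁⁻¹(s) for all s > 0. Suppose a scalar continuous function v : [0,T) → [0,∞) satisfies v(0) ≤ σ₁(c) with c := v(0), and the feedback estimate v(t) ≤ max{σ₁(c), σ₂(λ(sup_{s≤t} v(s)))} holds for all t. Then σ₂(λ(v(t))) ≤ c/2 for all t ∈ [0,T). -/

import Mathlib

open Set Filter

/-- A function of class `K`: continuous and strictly increasing on `[0,∞)` with `γ 0 = 0`. -/
def ClassK (γ : ℝ → ℝ) : Prop :=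
  ContinuousOn γ (Ici 0) ∧ StrictMonoOn γ (Ici 0) ∧ γ 0 = 0

/-- A function of class `K∞`: class `K` and unbounded. -/
def ClassKInfty (γ : ℝ → ℝ) : Prop :=
  ClassK γ ∧ Tendsto γ atTop atTop

/-- A function of class `KL`: class `K` in the first argument for each fixed `t ≥ 0`;
continuous, decreasing and converging to `0` in the second argument for each fixed `r ≥ 0`. -/
def ClassKL (β : ℝ → ℝ → ℝ) : Prop :=
  (∀ t ∈ Ici (0:ℝ), ClassK (fun r => β r t)) ∧
  (∀ r ∈ Ici (0:ℝ), ContinuousOn (β r) (Ici 0) ∧ AntitoneOn (β r) (Ici 0) ∧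
    Tendsto (β r) atTop (nhds 0))

/-- Abstract small-gain argument: if `σ₁, σ₂ ∈ K∞` with `σ₁(s) ≥ s`, `lam ∈ K∞` satisfies
`σ₂(lam(s)) < (1/4)σ₁⁻¹(s)` for `s > 0`, and a continuous nonnegative `v` on `[0,T)` with
`c := v 0` satisfies `v(t) ≤ max {σ₁(c), σ₂(lam(sup_{s ≤ t} v(s)))}`, then
`σ₂(lam(v(t))) ≤ c/2` on `[0,T)`. -/
theorem stmt18 (σ₁ σ₂ lam σ₁inv : ℝ → ℝ)
    (hσ₁ : ClassKInfty σ₁) (hσ₂ : ClassKInfty σ₂) (hlam : ClassKInfty lam)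
    (hσ₁ge : ∀ s : ℝ, 0 ≤ s → s ≤ σ₁ s)
    (hinv₁ : ∀ s : ℝ, 0 ≤ s → σ₁ (σ₁inv s) = s)
    (hinv₂ : ∀ s : ℝ, 0 ≤ s → σ₁inv (σ₁ s) = s)
    (hsmall : ∀ s : ℝ, 0 < s → σ₂ (lam s) < (1 / 4) * σ₁inv s)
    (T : ℝ) (v : ℝ → ℝ) (c : ℝ) (hc : c = v 0)
    (hvcont : ContinuousOn v (Ico 0 T))
    (hvnonneg : ∀ t ∈ Ico (0:ℝ) T, 0 ≤ v t)
    (hfb : ∀ t ∈ Ico (0:ℝ) T,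
      v t ≤ max (σ₁ c) (σ₂ (lam (sSup (v '' Icc 0 t))))) :
    ∀ t ∈ Ico (0:ℝ) T, σ₂ (lam (v t)) ≤ c / 2 := by
  intro t ht
  obtain ⟨ht0, htT⟩ := ht
  have h0T : (0:ℝ) ∈ Ico 0 T := ⟨le_refl _, lt_of_le_of_lt ht0 htT⟩
  have hc0 : 0 ≤ c := hc ▸ hvnonneg 0 h0T
  obtain ⟨⟨hσ₂cont, hσ₂mono, hσ₂zero⟩, -⟩ := hσ₂
  obtain ⟨⟨hlamcont, hlammono, hlamzero⟩, -⟩ := hlam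
  obtain ⟨⟨hσ₁cont, hσ₁mono, hσ₁zero⟩, -⟩ := hσ₁
  have hlamnn : ∀ s : ℝ, 0 ≤ s → 0 ≤ lam s := by
    intro s hs
    have := hlammono.monotoneOn (self_mem_Ici) (mem_Ici.2 hs) hs
    rw [hlamzero] at this; exact this
  have hσ₂nn : ∀ s : ℝ, 0 ≤ s → 0 ≤ σ₂ s := by
    intro s hs
    have := hσ₂mono.monotoneOn (self_mem_Ici) (mem_Ici.2 hs) hs
    rw [hσ₂zero] at this; exact this
  have hσ₂lam_mono : ∀ a b : ℝ, 0 ≤ a → a ≤ b → σ₂ (lam a) ≤ σ₂ (lam b) := by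
    intro a b ha hab
    have hb : (0:ℝ) ≤ b := ha.trans hab
    have h1 : lam a ≤ lam b := hlammono.monotoneOn (mem_Ici.2 ha) (mem_Ici.2 hb) hab
    exact hσ₂mono.monotoneOn (mem_Ici.2 (hlamnn a ha)) (mem_Ici.2 (hlamnn b hb)) h1
  have hsub : Icc (0:ℝ) t ⊆ Ico 0 T := fun x hx => ⟨hx.1, lt_of_le_of_lt hx.2 htT⟩
  have hne : (v '' Icc 0 t).Nonempty := ⟨v 0, ⟨0, ⟨le_refl _, ht0⟩, rfl⟩⟩
  have hbdd : BddAbove (v '' Icc 0 t) := isCompact_Icc.bddAbove_image (hvcont.mono hsub)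
  set S := sSup (v '' Icc 0 t) with hS
  have hSge0 : 0 ≤ S := le_trans (hc ▸ hc0) (le_csSup hbdd ⟨0, ⟨le_refl _, ht0⟩, rfl⟩)
  have hSbound : S ≤ max (σ₁ c) (σ₂ (lam S)) := by
    apply csSup_le hne
    rintro x ⟨s, hs, rfl⟩
    have hsIco : s ∈ Ico 0 T := hsub hs
    have hsub' : Icc (0:ℝ) s ⊆ Icc 0 t := Icc_subset_Icc le_rfl hs.2
    have hne' : (v '' Icc 0 s).Nonempty := ⟨v 0, ⟨0, ⟨le_refl _, hs.1⟩, rfl⟩⟩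
    have hSsle : sSup (v '' Icc 0 s) ≤ S :=
      csSup_le_csSup hbdd hne' (image_mono (f := v) hsub')
    have hSsge : (0:ℝ) ≤ sSup (v '' Icc 0 s) :=
      le_trans (hc ▸ hc0) (le_csSup (hbdd.mono (image_mono (f := v) hsub')) ⟨0, ⟨le_refl _, hs.1⟩, rfl⟩)
    calc v s ≤ max (σ₁ c) (σ₂ (lam (sSup (v '' Icc 0 s)))) := hfb s hsIco
      _ ≤ max (σ₁ c) (σ₂ (lam S)) :=
          max_le_max le_rfl (hσ₂lam_mono _ _ hSsge hSsle)
  have hSle : S ≤ σ₁ c := by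
    by_contra hgt
    push_neg at hgt
    have hSpos : 0 < S := lt_of_le_of_lt (hc0.trans (hσ₁ge c hc0)) hgt
    have hS2 : S ≤ σ₂ (lam S) := by
      rcases le_max_iff.1 hSbound with h | h
      · exact absurd h (not_le.2 hgt)
      · exact h
    have hsm := hsmall S hSpos
    have hσ₂nn' : 0 ≤ σ₂ (lam S) := hσ₂nn _ (hlamnn _ hSge0)
    have hinvpos : 0 ≤ σ₁inv S := by nlinarith
    have hinvle : σ₁inv S ≤ S := (hσ₁ge _ hinvpos).trans_eq (hinv₁ S hSge0)
    nlinarith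
  have hvt : v t ≤ σ₁ c := le_trans (le_csSup hbdd ⟨t, ⟨ht0, le_rfl⟩, rfl⟩) hSle
  have hvt0 : 0 ≤ v t := hvnonneg t ⟨ht0, htT⟩
  have hmono : σ₂ (lam (v t)) ≤ σ₂ (lam (σ₁ c)) := hσ₂lam_mono _ _ hvt0 hvt
  rcases eq_or_lt_of_le hc0 with hc0' | hcpos
  · have hσc : σ₁ c = 0 := by rw [← hc0', hσ₁zero]
    have hvt0' : v t = 0 := le_antisymm (hσc ▸ hvt) hvt0
    rw [hvt0', hlamzero, hσ₂zero, ← hc0']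
    norm_num
  · have hσcpos : 0 < σ₁ c := lt_of_lt_of_le hcpos (hσ₁ge c hc0)
    have := hsmall (σ₁ c) hσcpos
    rw [hinv₂ c hc0] at this
    linarith
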